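/- Let M be a k-vector space which is a left H-module via (f, m) ↦ f·m, and which carries a linear map α : M → H ⊗ M satisfying the left comodule axioms (Δ ⊗ id_M)∘α = (id_H ⊗ α)∘α and (ε ⊗ id_M)∘α = id_M; write α(m) = m_(-1) ⊗ m_(0). Define λ : M → H* ⊗ M by λ(m) = Σ_{j=1}^n e^j ⊗ (e_j · m). Then the Yetter-Drinfeld condition — α(f·m) = f_(1) m_(-1) S(f_(3)) ⊗ (f_(2) · m_(0)) for all f ∈ H and m ∈ M, where f_(1) ⊗ f_(2) ⊗ f_(3) = (Δ ⊗ id)Δ(f) — holds if and only if (Ad(w) ⊗ id_M) ∘ (id_H ⊗ λ) ∘ α = (σ ⊗ id_M) ∘ (id_{H*} ⊗ α) ∘ λ as linear maps M → H ⊗ H* ⊗ M, where σ : H* ⊗ H → H ⊗ H* is the flip map and Ad(w)(z) = w z w^{-1} is conjugation by w in the tensor product algebra H ⊗ H*. -/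

import Mathlib

open scoped TensorProduct

noncomputable section

variable (k H : Type*) [Field k] [Ring H] [HopfAlgebra k H]

/-- The convolution product on the linear dual `H*` of `H`, as a linear map
`H* ⊗ H* → H*`: it sends `x ⊗ y` to `a ↦ x(a_(1)) y(a_(2))`. -/
def convL : Module.Dual k H ⊗[k] Module.Dual k H →ₗ[k] Module.Dual k H :=
  LinearMap.lcomp k k (Coalgebra.comul (R := k) (A := H)) ∘ₗ
    TensorProduct.dualDistrib k H H

/-- The multiplication of the tensor product algebra `H ⊗ H*`, where `H*` carries the
convolution product:  `(f ⊗ x)(g ⊗ y) = fg ⊗ (x · y)`. -/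
def mulD : (H ⊗[k] Module.Dual k H) ⊗[k] (H ⊗[k] Module.Dual k H) →ₗ[k]
    H ⊗[k] Module.Dual k H :=
  TensorProduct.map (LinearMap.mul' k H) (convL k H) ∘ₗ
    (TensorProduct.tensorTensorTensorComm k H (Module.Dual k H) H
      (Module.Dual k H)).toLinearMap

variable {k H}

/-- The element `w = Σ_j e_j ⊗ e^j ∈ H ⊗ H*`. -/
def wElem {n : ℕ} (b : Module.Basis (Fin n) k H) : H ⊗[k] Module.Dual k H :=
  ∑ j : Fin n, b j ⊗ₜ[k] b.coord j

/-- The element `w⁻¹ = (S ⊗ id)(w) = Σ_j S(e_j) ⊗ e^j ∈ H ⊗ H*`. -/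
def wElemInv {n : ℕ} (b : Module.Basis (Fin n) k H) : H ⊗[k] Module.Dual k H :=
  ∑ j : Fin n, HopfAlgebra.antipode (R := k) (b j) ⊗ₜ[k] b.coord j

/-- Conjugation `Ad(w)(z) = w z w⁻¹` by `w` in the tensor product algebra `H ⊗ H*`. -/
def adW {n : ℕ} (b : Module.Basis (Fin n) k H) :
    H ⊗[k] Module.Dual k H →ₗ[k] H ⊗[k] Module.Dual k H :=
  mulD k H ∘ₗ
    TensorProduct.mk k (H ⊗[k] Module.Dual k H) (H ⊗[k] Module.Dual k H) (wElem b) ∘ₗ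
    mulD k H ∘ₗ
    (TensorProduct.mk k (H ⊗[k] Module.Dual k H) (H ⊗[k] Module.Dual k H)).flip
      (wElemInv b)

/-- The map `(f₁ ⊗ f₂) ⊗ c ↦ (f₁ c) ⊗ f₂`. -/
def mulOuter : (H ⊗[k] H) ⊗[k] H →ₗ[k] H ⊗[k] H :=
  TensorProduct.map (LinearMap.mul' k H) (LinearMap.id : H →ₗ[k] H) ∘ₗ
    (TensorProduct.assoc k H H H).symm.toLinearMap ∘ₗ
    TensorProduct.map (LinearMap.id : H →ₗ[k] H) (TensorProduct.comm k H H).toLinearMap ∘ₗ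
    (TensorProduct.assoc k H H H).toLinearMap

/-- The right hand side of the Yetter-Drinfeld condition, as a linear map `H ⊗ M → H ⊗ M`:
`f ⊗ m ↦ f_(1) m_(-1) S(f_(3)) ⊗ (f_(2) · m_(0))`, where `α(m) = m_(-1) ⊗ m_(0)` and
`f_(1) ⊗ f_(2) ⊗ f_(3) = (Δ ⊗ id)Δ(f)`. -/
def sweedlerYD {M : Type*} [AddCommGroup M] [Module k M]
    (act : H →ₗ[k] M →ₗ[k] M) (a : M →ₗ[k] H ⊗[k] M) : H ⊗[k] M →ₗ[k] H ⊗[k] M :=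
  TensorProduct.map (LinearMap.mul' k H) (TensorProduct.lift act) ∘ₗ
    (TensorProduct.tensorTensorTensorComm k H H H M).toLinearMap ∘ₗ
    TensorProduct.map mulOuter (LinearMap.id : H ⊗[k] M →ₗ[k] H ⊗[k] M) ∘ₗ
    (TensorProduct.tensorTensorTensorComm k (H ⊗[k] H) H H M).toLinearMap ∘ₗ
    TensorProduct.map
      (TensorProduct.map (LinearMap.id : H ⊗[k] H →ₗ[k] H ⊗[k] H)
          (HopfAlgebra.antipode (R := k)) ∘ₗ
        TensorProduct.map (Coalgebra.comul (R := k) (A := H)) (LinearMap.id : H →ₗ[k] H) ∘ₗ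
        Coalgebra.comul (R := k) (A := H))
      a

section Aux

open TensorProduct LinearMap

lemma mulD_tmul (h f : H) (x y : Module.Dual k H) :
    mulD k H ((h ⊗ₜ[k] x) ⊗ₜ[k] (f ⊗ₜ[k] y)) = (h * f) ⊗ₜ[k] convL k H (x ⊗ₜ[k] y) := by
  simp [mulD, TensorProduct.tensorTensorTensorComm_tmul, LinearMap.mul'_apply]

lemma adW_tmul {n : ℕ} (b : Module.Basis (Fin n) k H) (h : H) (x : Module.Dual k H) :
    adW b (h ⊗ₜ[k] x)
      = ∑ i : Fin n, ∑ l : Fin n,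
          (b i * (h * HopfAlgebra.antipode (R := k) (b l))) ⊗ₜ[k]
            convL k H (b.coord i ⊗ₜ convL k H (x ⊗ₜ b.coord l)) := by
  simp only [adW, LinearMap.comp_apply, LinearMap.flip_apply, TensorProduct.mk_apply,
    wElem, wElemInv, LinearMap.sum_apply, TensorProduct.tmul_sum, TensorProduct.sum_tmul,
    map_sum, mulD_tmul]
  rw [Finset.sum_comm]

variable {M : Type*} [AddCommGroup M] [Module k M]

def evD (g : H) : H ⊗[k] Module.Dual k H →ₗ[k] H :=
  (TensorProduct.rid k H).toLinearMap ∘ₗ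
    TensorProduct.map LinearMap.id (LinearMap.applyₗ (R := k) g)

@[simp] lemma evD_tmul (g h : H) (x : Module.Dual k H) :
    evD g (h ⊗ₜ[k] x) = x g • h := by
  simp [evD]

def evT (M : Type*) [AddCommGroup M] [Module k M] (g : H) :
    (H ⊗[k] Module.Dual k H) ⊗[k] M →ₗ[k] H ⊗[k] M :=
  TensorProduct.map (evD g) LinearMap.id

@[simp] lemma evT_tmul (g : H) (z : H ⊗[k] Module.Dual k H) (m : M) :
    evT M g (z ⊗ₜ[k] m) = evD g z ⊗ₜ[k] m := rfl

set_option synthInstance.maxHeartbeats 400000 in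
lemma evT_injective {n : ℕ} (b : Module.Basis (Fin n) k H)
    {z z' : (H ⊗[k] Module.Dual k H) ⊗[k] M}
    (hz : ∀ g : H, evT M g z = evT M g z') : z = z' := by
  let E : (H ⊗[k] Module.Dual k H) ⊗[k] M ≃ₗ[k] (H →ₗ[k] H ⊗[k] M) :=
    (TensorProduct.assoc k H (Module.Dual k H) M) ≪≫ₗ
      (TensorProduct.leftComm k H (Module.Dual k H) M) ≪≫ₗ
      dualTensorHomEquivOfBasis (N := H ⊗[k] M) b
  have key : ∀ (w : (H ⊗[k] Module.Dual k H) ⊗[k] M) (g : H),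
      E.toLinearMap w g = evT M g w := by
    intro w
    induction w using TensorProduct.induction_on with
    | zero => intro g; rw [LinearMap.map_zero, LinearMap.map_zero, LinearMap.zero_apply]
    | tmul zz m =>
      induction zz using TensorProduct.induction_on with
      | zero => intro g; simp [TensorProduct.zero_tmul]
      | tmul h₀ x =>
        intro g
        simp [E, TensorProduct.assoc_tmul, TensorProduct.leftComm_tmul,
          dualTensorHom_apply, TensorProduct.smul_tmul']
      | add w₁ w₂ h₁ h₂ =>
        intro g
        simp only [TensorProduct.add_tmul, map_add, LinearMap.add_apply, h₁ g, h₂ g]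
    | add w₁ w₂ h₁ h₂ =>
      intro g
      simp only [map_add, LinearMap.add_apply, h₁ g, h₂ g]
  apply E.injective
  apply LinearMap.ext
  intro g
  show E.toLinearMap z g = E.toLinearMap z' g
  rw [key, key, hz g]

variable {n : ℕ}

lemma keyB (b : Module.Basis (Fin n) k H)
    (act : H →ₗ[k] M →ₗ[k] M) (a : M →ₗ[k] H ⊗[k] M)
    (lam : M →ₗ[k] Module.Dual k H ⊗[k] M)
    (hlam : lam = ∑ j : Fin n,
      TensorProduct.mk k (Module.Dual k H) M (b.coord j) ∘ₗ act (b j))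
    (g : H) (m : M) :
    evT M g
      ((TensorProduct.map (TensorProduct.comm k (Module.Dual k H) H).toLinearMap
            (LinearMap.id : M →ₗ[k] M) ∘ₗ
          (TensorProduct.assoc k (Module.Dual k H) H M).symm.toLinearMap ∘ₗ
          TensorProduct.map (LinearMap.id : Module.Dual k H →ₗ[k] Module.Dual k H) a ∘ₗ
          lam) m)
      = a (act g m) := by
  have step : ∀ (x : Module.Dual k H) (t : H ⊗[k] M),
      evT M g
        (TensorProduct.map (TensorProduct.comm k (Module.Dual k H) H).toLinearMap
            (LinearMap.id : M →ₗ[k] M)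
          ((TensorProduct.assoc k (Module.Dual k H) H M).symm (x ⊗ₜ t)))
        = x g • t := by
    intro x t
    induction t using TensorProduct.induction_on with
    | zero => simp
    | tmul h₀ m₀ =>
      simp [TensorProduct.assoc_symm_tmul, TensorProduct.comm_tmul,
        TensorProduct.smul_tmul']
    | add t₁ t₂ h₁ h₂ =>
      simp only [TensorProduct.tmul_add, map_add, h₁, h₂, smul_add]
  have hlm : lam m = ∑ j : Fin n, b.coord j ⊗ₜ[k] act (b j) m := by
    rw [hlam]; simp
  have e1 : (TensorProduct.map (TensorProduct.comm k (Module.Dual k H) H).toLinearMap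
            (LinearMap.id : M →ₗ[k] M) ∘ₗ
          (TensorProduct.assoc k (Module.Dual k H) H M).symm.toLinearMap ∘ₗ
          TensorProduct.map (LinearMap.id : Module.Dual k H →ₗ[k] Module.Dual k H) a ∘ₗ
          lam) m
      = ∑ j : Fin n,
          TensorProduct.map (TensorProduct.comm k (Module.Dual k H) H).toLinearMap
            (LinearMap.id : M →ₗ[k] M)
            ((TensorProduct.assoc k (Module.Dual k H) H M).symm
              (b.coord j ⊗ₜ a (act (b j) m))) := by
    simp only [LinearMap.comp_apply, LinearEquiv.coe_coe, hlm, map_sum,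
      TensorProduct.map_tmul, LinearMap.id_coe, id_eq]
  rw [e1, map_sum, Finset.sum_congr rfl fun j _ => step (b.coord j) (a (act (b j) m))]
  have e2 : ∑ j : Fin n, b.coord j g • a (act (b j) m)
      = a (act (∑ j : Fin n, b.coord j g • b j) m) := by
    simp only [map_sum, LinearMap.sum_apply, map_smul, LinearMap.smul_apply]
  rw [e2, show (∑ j : Fin n, b.coord j g • b j) = g from by
    simpa [Module.Basis.coord_apply] using b.sum_repr g]

lemma convL_eval (x y : Module.Dual k H) (g : H) :
    convL k H (x ⊗ₜ y) g
      = TensorProduct.dualDistrib k H H (x ⊗ₜ y) (Coalgebra.comul (R := k) g) := rfl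

lemma dualDistrib_comul (x : Module.Dual k H) (ψ : Module.Dual k (H ⊗[k] H))
    (z : H ⊗[k] H) :
    TensorProduct.dualDistrib k H H
        (x ⊗ₜ (ψ ∘ₗ Coalgebra.comul (R := k) (A := H))) z
      = TensorProduct.dualDistrib k H (H ⊗[k] H) (x ⊗ₜ ψ)
          ((Coalgebra.comul (R := k) (A := H)).lTensor H z) := by
  induction z using TensorProduct.induction_on with
  | zero => simp
  | tmul c d => simp
  | add z₁ z₂ h₁ h₂ => simp [map_add, h₁, h₂]

lemma convL_convL (x y z : Module.Dual k H) (g : H) :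
    convL k H (x ⊗ₜ convL k H (y ⊗ₜ z)) g
      = TensorProduct.dualDistrib k H (H ⊗[k] H)
          (x ⊗ₜ TensorProduct.dualDistrib k H H (y ⊗ₜ z))
          ((Coalgebra.comul (R := k) (A := H)).lTensor H
            (Coalgebra.comul (R := k) g)) := by
  have hconv : convL k H (y ⊗ₜ z)
      = (TensorProduct.dualDistrib k H H (y ⊗ₜ z)) ∘ₗ
          Coalgebra.comul (R := k) (A := H) := rfl
  rw [convL_eval, hconv, dualDistrib_comul]

lemma coassoc' (g : H) :
    TensorProduct.map (Coalgebra.comul (R := k) (A := H)) LinearMap.id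
        (Coalgebra.comul (R := k) g)
      = (TensorProduct.assoc k H H H).symm
          ((Coalgebra.comul (R := k) (A := H)).lTensor H (Coalgebra.comul (R := k) g)) := by
  rw [Coalgebra.coassoc_symm_apply]; rfl

section KeyA

variable (act : H →ₗ[k] M →ₗ[k] M) (h₀ : H) (m₀ : M)

/-- the tail of `sweedlerYD`. -/
def REST (act : H →ₗ[k] M →ₗ[k] M) :
    ((H ⊗[k] H) ⊗[k] H) ⊗[k] (H ⊗[k] M) →ₗ[k] H ⊗[k] M :=
  TensorProduct.map (LinearMap.mul' k H) (TensorProduct.lift act) ∘ₗ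
    (TensorProduct.tensorTensorTensorComm k H H H M).toLinearMap ∘ₗ
    TensorProduct.map (mulOuter) (LinearMap.id : H ⊗[k] M →ₗ[k] H ⊗[k] M) ∘ₗ
    (TensorProduct.tensorTensorTensorComm k (H ⊗[k] H) H H M).toLinearMap

def Bmap (act : H →ₗ[k] M →ₗ[k] M) (h₀ : H) (m₀ : M) :
    H ⊗[k] (H ⊗[k] H) →ₗ[k] H ⊗[k] M :=
  REST act ∘ₗ
    (TensorProduct.mk k ((H ⊗[k] H) ⊗[k] H) (H ⊗[k] M)).flip (h₀ ⊗ₜ[k] m₀) ∘ₗ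
    TensorProduct.map (LinearMap.id : H ⊗[k] H →ₗ[k] H ⊗[k] H)
      (HopfAlgebra.antipode (R := k)) ∘ₗ
    (TensorProduct.assoc k H H H).symm.toLinearMap

lemma Bmap_tmul (c u v : H) :
    Bmap act h₀ m₀ (c ⊗ₜ[k] (u ⊗ₜ[k] v))
      = ((c * h₀) * HopfAlgebra.antipode (R := k) v) ⊗ₜ[k] act u m₀ := by
  simp [Bmap, REST, mulOuter, TensorProduct.assoc_symm_tmul, TensorProduct.assoc_tmul,
    TensorProduct.map_tmul, TensorProduct.comm_tmul,
    TensorProduct.tensorTensorTensorComm_tmul, LinearMap.mul'_apply, LinearMap.flip_apply,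
    TensorProduct.mk_apply, TensorProduct.lift.tmul]

def Amap (b : Module.Basis (Fin n) k H) (act : H →ₗ[k] M →ₗ[k] M) (h₀ : H) (m₀ : M) :
    H ⊗[k] (H ⊗[k] H) →ₗ[k] H ⊗[k] M :=
  ∑ i : Fin n, ∑ j : Fin n, ∑ l : Fin n,
    (TensorProduct.dualDistrib k H (H ⊗[k] H)
        (b.coord i ⊗ₜ TensorProduct.dualDistrib k H H (b.coord j ⊗ₜ b.coord l))).smulRight
      ((b i * (h₀ * HopfAlgebra.antipode (R := k) (b l))) ⊗ₜ[k] act (b j) m₀)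

lemma Amap_tmul (b : Module.Basis (Fin n) k H) (c u v : H) :
    Amap b act h₀ m₀ (c ⊗ₜ[k] (u ⊗ₜ[k] v))
      = ∑ i : Fin n, ∑ j : Fin n, ∑ l : Fin n,
          (b.repr c i * (b.repr u j * b.repr v l)) •
            ((b i * (h₀ * HopfAlgebra.antipode (R := k) (b l))) ⊗ₜ[k] act (b j) m₀) := by
  simp [Amap, LinearMap.sum_apply, LinearMap.smulRight_apply,
    TensorProduct.dualDistrib_apply, Module.Basis.coord_apply]

lemma tensor_expand (b : Module.Basis (Fin n) k H) (c u v : H) :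
    (c ⊗ₜ[k] (u ⊗ₜ[k] v) : H ⊗[k] (H ⊗[k] H))
      = ∑ i : Fin n, ∑ j : Fin n, ∑ l : Fin n,
          (b.repr c i * (b.repr u j * b.repr v l)) • (b i ⊗ₜ[k] (b j ⊗ₜ[k] b l)) := by
  have hterm : ∀ i j l : Fin n,
      (b.repr c i * (b.repr u j * b.repr v l)) • (b i ⊗ₜ[k] (b j ⊗ₜ[k] b l))
        = (b.repr c i • b i) ⊗ₜ[k] ((b.repr u j • b j) ⊗ₜ[k] (b.repr v l • b l)) := by
    intro i j l
    conv_rhs => rw [← TensorProduct.smul_tmul', ← TensorProduct.smul_tmul']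
    simp only [TensorProduct.tmul_smul, smul_smul]
  symm
  simp_rw [hterm, ← TensorProduct.tmul_sum, ← TensorProduct.sum_tmul, b.sum_repr]

lemma Amap_eq_Bmap (b : Module.Basis (Fin n) k H) :
    ∀ z : H ⊗[k] (H ⊗[k] H), Amap b act h₀ m₀ z = Bmap act h₀ m₀ z := by
  intro z
  induction z using TensorProduct.induction_on with
  | zero => simp
  | add z₁ z₂ h₁ h₂ => rw [map_add, map_add, h₁, h₂]
  | tmul c t =>
    induction t using TensorProduct.induction_on with
    | zero => simp [TensorProduct.tmul_zero]
    | add t₁ t₂ h₁ h₂ =>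
      rw [TensorProduct.tmul_add, map_add, map_add, h₁, h₂]
    | tmul u v =>
      rw [Amap_tmul, Bmap_tmul]
      have : ∀ i j l : Fin n,
          (b i * (h₀ * HopfAlgebra.antipode (R := k) (b l))) ⊗ₜ[k] act (b j) m₀
            = Bmap act h₀ m₀ (b i ⊗ₜ[k] (b j ⊗ₜ[k] b l)) := by
        intro i j l; rw [Bmap_tmul, mul_assoc]
      simp_rw [this, ← map_smul, ← map_sum, ← tensor_expand b, Bmap_tmul]

end KeyA

set_option synthInstance.maxHeartbeats 1000000 in
set_option maxHeartbeats 1000000 in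
lemma keyA (b : Module.Basis (Fin n) k H)
    (act : H →ₗ[k] M →ₗ[k] M) (a : M →ₗ[k] H ⊗[k] M)
    (lam : M →ₗ[k] Module.Dual k H ⊗[k] M)
    (hlam : lam = ∑ j : Fin n,
      TensorProduct.mk k (Module.Dual k H) M (b.coord j) ∘ₗ act (b j))
    (g : H) (m : M) :
    evT M g
      ((TensorProduct.map (adW b) (LinearMap.id : M →ₗ[k] M) ∘ₗ
          (TensorProduct.assoc k H (Module.Dual k H) M).symm.toLinearMap ∘ₗ
          TensorProduct.map (LinearMap.id : H →ₗ[k] H) lam ∘ₗ a) m)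
      = sweedlerYD act a (g ⊗ₜ[k] m) := by
  set T : H ⊗[k] (H ⊗[k] H) :=
    (Coalgebra.comul (R := k) (A := H)).lTensor H (Coalgebra.comul (R := k) g) with hT
  have hsw : sweedlerYD act a (g ⊗ₜ[k] m)
      = REST act
          ((TensorProduct.map (LinearMap.id : H ⊗[k] H →ₗ[k] H ⊗[k] H)
              (HopfAlgebra.antipode (R := k)) ((TensorProduct.assoc k H H H).symm T))
            ⊗ₜ[k] a m) := by
    simp only [sweedlerYD, REST, LinearMap.comp_apply, TensorProduct.map_tmul]
    rw [coassoc']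
  have main : ∀ t : H ⊗[k] M,
      evT M g
        (TensorProduct.map (adW b) (LinearMap.id : M →ₗ[k] M)
          ((TensorProduct.assoc k H (Module.Dual k H) M).symm
            (TensorProduct.map (LinearMap.id : H →ₗ[k] H) lam t)))
        = REST act
            ((TensorProduct.map (LinearMap.id : H ⊗[k] H →ₗ[k] H ⊗[k] H)
                (HopfAlgebra.antipode (R := k)) ((TensorProduct.assoc k H H H).symm T))
              ⊗ₜ[k] t) := by
    intro t
    induction t using TensorProduct.induction_on with
    | zero =>
      rw [LinearMap.map_zero, (TensorProduct.assoc k H (Module.Dual k H) M).symm.map_zero,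
        LinearMap.map_zero, LinearMap.map_zero, TensorProduct.tmul_zero, LinearMap.map_zero]
    | add t₁ t₂ h₁ h₂ =>
      simp only [map_add, TensorProduct.tmul_add]
      rw [h₁, h₂]
    | tmul h₀ m₀ =>
      have hRHS : REST act
            ((TensorProduct.map (LinearMap.id : H ⊗[k] H →ₗ[k] H ⊗[k] H)
                (HopfAlgebra.antipode (R := k)) ((TensorProduct.assoc k H H H).symm T))
              ⊗ₜ[k] (h₀ ⊗ₜ[k] m₀))
          = Bmap act h₀ m₀ T := by
        simp only [Bmap, LinearMap.comp_apply, LinearMap.flip_apply,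
          TensorProduct.mk_apply, LinearEquiv.coe_coe]
      rw [hRHS, ← Amap_eq_Bmap act h₀ m₀ b]
      have hlm : lam m₀ = ∑ j : Fin n, b.coord j ⊗ₜ[k] act (b j) m₀ := by
        rw [hlam]; simp
      simp only [TensorProduct.map_tmul, LinearMap.id_coe, id_eq, hlm,
        TensorProduct.tmul_sum, map_sum, TensorProduct.assoc_symm_tmul, evT_tmul,
        adW_tmul, evD_tmul, convL_convL, ← hT, TensorProduct.sum_tmul,
        ← TensorProduct.smul_tmul']
      simp only [Amap, LinearMap.sum_apply, LinearMap.smulRight_apply]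
      rw [Finset.sum_comm]
  rw [LinearMap.comp_apply, LinearMap.comp_apply, LinearMap.comp_apply,
    LinearEquiv.coe_coe, main (a m), ← hsw]

end Aux

/-- Let `H` be a finite dimensional Hopf algebra over a field `k` with basis
`e_1, …, e_n`, let `M` be a left `H`-module which is also a left `H`-comodule via
`α : M → H ⊗ M`, and define `λ : M → H* ⊗ M` by `λ(m) = Σ_j e^j ⊗ (e_j · m)`.  Then the
Yetter-Drinfeld condition `α(f·m) = f_(1) m_(-1) S(f_(3)) ⊗ (f_(2) · m_(0))` (for all
`f ∈ H`, `m ∈ M`) holds if and only if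
`(Ad(w) ⊗ id_M) ∘ (id_H ⊗ λ) ∘ α = (σ ⊗ id_M) ∘ (id_{H*} ⊗ α) ∘ λ` as linear maps
`M → H ⊗ H* ⊗ M`, where `σ : H* ⊗ H → H ⊗ H*` is the flip and `Ad(w)` is conjugation by
`w = Σ_j e_j ⊗ e^j`. -/
theorem yetter_drinfeld_iff_drinfeld_double_compatibility
    {k H : Type*} [Field k] [Ring H] [HopfAlgebra k H] {n : ℕ} (b : Module.Basis (Fin n) k H)
    {M : Type*} [AddCommGroup M] [Module k M]
    (act : H →ₗ[k] M →ₗ[k] M)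
    (hact_one : act 1 = LinearMap.id)
    (hact_mul : ∀ f g : H, act (f * g) = act f ∘ₗ act g)
    (a : M →ₗ[k] H ⊗[k] M)
    (hcoassoc :
      (TensorProduct.assoc k H H M).toLinearMap ∘ₗ
          TensorProduct.map (Coalgebra.comul (R := k) (A := H))
            (LinearMap.id : M →ₗ[k] M) ∘ₗ a
        = TensorProduct.map (LinearMap.id : H →ₗ[k] H) a ∘ₗ a)
    (hcounit :
      (TensorProduct.lid k M).toLinearMap ∘ₗ
          TensorProduct.map (Coalgebra.counit (R := k) (A := H))
            (LinearMap.id : M →ₗ[k] M) ∘ₗ a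
        = LinearMap.id)
    (lam : M →ₗ[k] Module.Dual k H ⊗[k] M)
    (hlam : lam = ∑ j : Fin n,
      TensorProduct.mk k (Module.Dual k H) M (b.coord j) ∘ₗ act (b j)) :
    (∀ (f : H) (m : M), a (act f m) = sweedlerYD act a (f ⊗ₜ[k] m))
      ↔
    (TensorProduct.map (adW b) (LinearMap.id : M →ₗ[k] M) ∘ₗ
        (TensorProduct.assoc k H (Module.Dual k H) M).symm.toLinearMap ∘ₗ
        TensorProduct.map (LinearMap.id : H →ₗ[k] H) lam ∘ₗ a
      = TensorProduct.map (TensorProduct.comm k (Module.Dual k H) H).toLinearMap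
            (LinearMap.id : M →ₗ[k] M) ∘ₗ
          (TensorProduct.assoc k (Module.Dual k H) H M).symm.toLinearMap ∘ₗ
          TensorProduct.map (LinearMap.id : Module.Dual k H →ₗ[k] Module.Dual k H) a ∘ₗ
          lam) := by
  constructor
  · intro hyd
    apply LinearMap.ext
    intro m
    apply evT_injective b
    intro g
    rw [keyA b act a lam hlam g m, keyB b act a lam hlam g m]
    exact (hyd g m).symm
  · intro heq f m
    have h1 := congrArg (evT M f) (LinearMap.congr_fun heq m)
    rw [keyA b act a lam hlam f m, keyB b act a lam hlam f m] at h1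
    exact h1.symm


end
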